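/- Let H be a ℚ-vector space and P[i] (i ∈ ℤ) a family of linear operators on H = ⊕_{n∈ℤ} H_n such that P[i] maps H_n to H_{n−i}. Suppose that for fixed α-pairings there are constants c_{i,n} with [P_α[i], P_β[−i]]·v = c_{i,n}·⟨α,β⟩·v for all v ∈ H_n, and that [P_γ[k], [P_α[i], P_β[−i]]] = 0 whenever k ≠ ±i. If moreover for every pair (n, k) with k ∈ {1} (case i ≠ 1) or k ∈ {2, 3} (case i = 1) there exist α, β, γ, v ∈ H_n with ⟨α,β⟩ ≠ 0 and P_γ[k]v ≠ 0, then c_{i,n} is independent of n. -/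

import Mathlib

/-- **Independence of the Heisenberg constants from the grading degree.**
Let `V = ⊕_n H_n` be a graded `ℚ`-vector space and `P_α[i]` (`α` in an index type `A`,
`i ∈ ℤ`) a family of operators such that `P_α[i]` maps `H_n` to `H_{n−i}`.  Suppose there
are constants `c_{i,n}` with `[P_α[i], P_β[−i]] v = c_{i,n}·⟨α,β⟩·v` for all `v ∈ H_n`,
and `[P_γ[k], [P_α[i], P_β[−i]]] = 0` whenever `k ≠ ±i`.  If moreover for every `n` and
every `k ∈ {1, 2, 3}` there exist `α, β, γ` and `v ∈ H_n` with `⟨α,β⟩ ≠ 0` and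
`P_γ[k] v ≠ 0`, then `c_{i,n}` is independent of `n`. -/
theorem heisenberg_constant_independent_of_degree
    {V : Type*} [AddCommGroup V] [Module ℚ V] {A : Type*}
    (H : ℤ → Submodule ℚ V) (pair : A → A → ℚ) (P : A → ℤ → Module.End ℚ V)
    (c : ℤ → ℤ → ℚ)
    (hshift : ∀ (α : A) (i n : ℤ), ∀ v ∈ H n, P α i v ∈ H (n - i))
    (hcomm : ∀ (α β : A) (i n : ℤ), ∀ v ∈ H n,
      (P α i * P β (-i) - P β (-i) * P α i) v = (c i n * pair α β) • v)
    (hzero : ∀ (α β γ : A) (i k : ℤ), k ≠ i → k ≠ -i →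
      P γ k * (P α i * P β (-i) - P β (-i) * P α i) =
        (P α i * P β (-i) - P β (-i) * P α i) * P γ k)
    (hex : ∀ (n k : ℤ), k = 1 ∨ k = 2 ∨ k = 3 →
      ∃ (α β γ : A), ∃ v ∈ H n, pair α β ≠ 0 ∧ P γ k v ≠ 0) :
    ∀ i n m : ℤ, c i n = c i m := by
  intro i
  -- Step: for admissible k, c i n = c i (n - k)
  have step : ∀ k : ℤ, (k = 1 ∨ k = 2 ∨ k = 3) → k ≠ i → k ≠ -i →
      ∀ n : ℤ, c i n = c i (n - k) := by
    intro k hk hki hki' n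
    obtain ⟨α, β, γ, v, hv, hpair, hPv⟩ := hex n k hk
    have hv' : P γ k v ∈ H (n - k) := hshift γ k n v hv
    set C : Module.End ℚ V := P α i * P β (-i) - P β (-i) * P α i with hC
    have e1 : C v = (c i n * pair α β) • v := hcomm α β i n v hv
    have e2 : C (P γ k v) = (c i (n - k) * pair α β) • (P γ k v) :=
      hcomm α β i (n - k) _ hv'
    have e3 : P γ k (C v) = C (P γ k v) := by
      have := hzero α β γ i k hki hki'
      calc P γ k (C v) = (P γ k * C) v := rfl
        _ = (C * P γ k) v := by rw [this]
        _ = C (P γ k v) := rfl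
    have e4 : (c i n * pair α β) • (P γ k v) = (c i (n - k) * pair α β) • (P γ k v) := by
      rw [← e2, ← e3, e1, map_smul]
    have e5 : (c i n * pair α β - c i (n - k) * pair α β) • (P γ k v) = 0 := by
      rw [sub_smul, e4, sub_self]
    rcases smul_eq_zero.mp e5 with h | h
    · have : (c i n - c i (n - k)) * pair α β = 0 := by ring_nf; ring_nf at h; linarith
      rcases mul_eq_zero.mp this with h' | h'
      · linarith [sub_eq_zero.mp h']
      · exact absurd h' hpair
    · exact absurd h hPv
  -- c i n = c i (n + 1) for all n
  have key : ∀ n : ℤ, c i n = c i (n + 1) := by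
    intro n
    by_cases h1 : (1 : ℤ) ≠ i ∧ (1 : ℤ) ≠ -i
    · have := step 1 (Or.inl rfl) h1.1 h1.2 (n + 1)
      simpa using this.symm
    · have hi : i = 1 ∨ i = -1 := by omega
      have h2 : (2 : ℤ) ≠ i ∧ (2 : ℤ) ≠ -i := by omega
      have h3 : (3 : ℤ) ≠ i ∧ (3 : ℤ) ≠ -i := by omega
      have s2 := step 2 (Or.inr (Or.inl rfl)) h2.1 h2.2 (n + 3)
      have s3 := step 3 (Or.inr (Or.inr rfl)) h3.1 h3.2 (n + 3)
      have e2 : n + 3 - 2 = n + 1 := by ring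
      have e3 : n + 3 - 3 = n := by ring
      rw [e2] at s2; rw [e3] at s3
      rw [← s3, s2]
  have key' : ∀ n : ℤ, c i (n + 1) = c i n := fun n => (key n).symm
  -- constant
  intro n m
  have aux : ∀ d : ℤ, c i n = c i (n + d) := by
    intro d
    induction d using Int.induction_on with
    | zero => simp
    | succ k ih => rw [ih]; have := key (n + k); rw [this]; ring_nf
    | pred k ih =>
        rw [ih]
        have := key (n + (-(k+1)))
        have e : n + -(k : ℤ) = n + -(k + 1) + 1 := by ring
        rw [e, ← this]; congr 1; ring
  have := aux (m - n)
  simpa using this
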